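/- Let σ_n(x,f) denote the Fejér means of the Fourier series of f ∈ L^1(𝕋), and let (θ_n) be a sequence with |θ_n| ≤ C/n for some constant C. Then σ_n(x + θ_n, f) → f(x) as n → ∞ at every Lebesgue point x of f. -/

import Mathlib

open MeasureTheory Real Set Filter Topology

/-- The Fejér kernel `K_n(t) = (1/(n+1)) (sin((n+1)t/2) / sin(t/2))²`. -/
noncomputable def fejerK (n : ℕ) (t : ℝ) : ℝ :=
  (1 / ((n : ℝ) + 1)) * (Real.sin (((n : ℝ) + 1) * t / 2)) ^ 2 / (Real.sin (t / 2)) ^ 2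

lemma fejerK_nonneg (n : ℕ) (t : ℝ) : 0 ≤ fejerK n t := by
  unfold fejerK; positivity

lemma abs_sin_nat_mul_le (m : ℕ) (u : ℝ) : |Real.sin ((m:ℝ) * u)| ≤ (m:ℝ) * |Real.sin u| := by
  induction m with
  | zero => simp
  | succ k ih =>
    have h1 : ((k:ℝ)+1) * u = (k:ℝ)*u + u := by ring
    push_cast
    rw [h1, Real.sin_add]
    calc |Real.sin ((k:ℝ)*u) * Real.cos u + Real.cos ((k:ℝ)*u) * Real.sin u|
        ≤ |Real.sin ((k:ℝ)*u) * Real.cos u| + |Real.cos ((k:ℝ)*u) * Real.sin u| := abs_add_le _ _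
      _ ≤ |Real.sin ((k:ℝ)*u)| * 1 + 1 * |Real.sin u| := by
          rw [abs_mul, abs_mul]
          gcongr <;> first | exact Real.abs_cos_le_one _ | skip
      _ ≤ (k:ℝ) * |Real.sin u| + 1 * |Real.sin u| := by
          rw [mul_one]
          exact add_le_add_left ih _
      _ = ((k:ℝ)+1) * |Real.sin u| := by ring

lemma fejerK_le (n : ℕ) (t : ℝ) : fejerK n t ≤ (n:ℝ) + 1 := by
  by_cases hs : Real.sin (t/2) = 0
  · unfold fejerK; rw [hs]
    simp only [ne_eq, OfNat.ofNat_ne_zero, not_false_eq_true, zero_pow, div_zero]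
    positivity
  · have hB : 0 < Real.sin (t/2) ^ 2 := by positivity
    have h1 : |Real.sin (((n:ℝ)+1) * t / 2)| ≤ ((n:ℝ)+1) * |Real.sin (t/2)| := by
      have := abs_sin_nat_mul_le (n+1) (t/2)
      push_cast at this
      have he : ((n:ℝ)+1) * t / 2 = ((n:ℝ)+1) * (t/2) := by ring
      rw [he]; exact this
    have h2 : Real.sin (((n:ℝ)+1) * t / 2) ^ 2 ≤ ((n:ℝ)+1)^2 * Real.sin (t/2) ^ 2 := by
      have h3 := mul_self_le_mul_self (abs_nonneg _) h1
      rw [abs_mul_abs_self] at h3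
      calc Real.sin (((n:ℝ)+1) * t / 2) ^ 2 = Real.sin (((n:ℝ)+1) * t / 2) * Real.sin (((n:ℝ)+1) * t / 2) := sq _
        _ ≤ ((n:ℝ)+1) * |Real.sin (t/2)| * (((n:ℝ)+1) * |Real.sin (t/2)|) := h3
        _ = ((n:ℝ)+1)^2 * Real.sin (t/2) ^ 2 := by rw [← sq_abs (Real.sin (t/2))] ; ring
    unfold fejerK
    rw [div_le_iff₀ hB]
    have hn : (0:ℝ) < (n:ℝ) + 1 := by positivity
    calc 1 / ((n:ℝ)+1) * Real.sin (((n:ℝ)+1) * t / 2) ^ 2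
        ≤ 1 / ((n:ℝ)+1) * (((n:ℝ)+1)^2 * Real.sin (t/2) ^ 2) := by gcongr
      _ = ((n:ℝ)+1) * Real.sin (t/2)^2 := by field_simp

lemma sin_lower {v : ℝ} (h0 : 0 ≤ v) (h1 : v ≤ 3*π/4) : v/4 ≤ Real.sin v := by
  rcases le_or_gt v (π/2) with hv | hv
  · have h5 := Real.mul_le_sin h0 hv
    have h8 : (1:ℝ)/4 ≤ 2/π := by
      rw [div_le_div_iff₀ (by norm_num) Real.pi_pos]
      nlinarith [Real.pi_le_four]
    have h9 : v/4 ≤ 2/π * v := by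
      calc v/4 = 1/4 * v := by ring
        _ ≤ 2/π * v := mul_le_mul_of_nonneg_right h8 h0
    linarith
  · have h2 : Real.cos (v - π/2) = Real.sin v := Real.cos_sub_pi_div_two v
    have h3 : Real.cos (v - π/2) ≥ Real.cos (π/4) := by
      apply Real.cos_le_cos_of_nonneg_of_le_pi
      · linarith
      · nlinarith [Real.pi_pos]
      · linarith
    rw [Real.cos_pi_div_four] at h3
    have h4 : (1.4 :ℝ) ≤ Real.sqrt 2 := by
      rw [show (1.4:ℝ) = Real.sqrt (1.4^2) by rw [Real.sqrt_sq] ; norm_num]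
      apply Real.sqrt_le_sqrt; norm_num
    nlinarith [Real.pi_lt_d2]

lemma abs_sin_lower {v : ℝ} (h1 : |v| ≤ 3*π/4) : |v|/4 ≤ |Real.sin v| := by
  have h0 : Real.sin |v| ≥ 0 := by
    apply Real.sin_nonneg_of_nonneg_of_le_pi (abs_nonneg v)
    nlinarith [Real.pi_pos]
  have h2 : |Real.sin v| = Real.sin |v| := by
    rcases le_or_gt 0 v with hv | hv
    · rw [abs_of_nonneg hv] at h0 ⊢
      exact abs_of_nonneg h0
    · rw [abs_of_neg hv] at h0 ⊢
      rw [Real.sin_neg] at h0 ⊢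
      rw [abs_of_nonpos (by linarith)]
  rw [h2]
  exact sin_lower (abs_nonneg v) h1

lemma fejerK_le_inv_sq (n : ℕ) {t : ℝ} (ht : |t| ≤ 3*π/2) :
    fejerK n t ≤ 64 / (((n:ℝ)+1) * t^2) := by
  rcases eq_or_ne t 0 with rfl | ht0
  · unfold fejerK
    norm_num [Real.sin_zero]
  · have h1 : |t/2| ≤ 3*π/4 := by rw [abs_div] ; rw [abs_of_nonneg (by norm_num : (0:ℝ) ≤ 2)] ; linarith
    have h2 := abs_sin_lower h1
    have h3 : 0 < |t/2| := by positivity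
    have h4 : t^2/64 ≤ Real.sin (t/2)^2 := by
      have := mul_self_le_mul_self (by positivity : (0:ℝ) ≤ |t/2|/4) h2
      rw [abs_mul_abs_self] at this
      have ha : |t/2|/4 * (|t/2|/4) = t^2/64 := by
        have hb : |t/2| * |t/2| = (t/2) * (t/2) := abs_mul_abs_self _
        linear_combination (1/16) * hb
      rw [ha] at this
      rw [pow_two]
      linarith
    have h5 : 0 < t^2/64 := by positivity
    unfold fejerK
    have h6 : 1/((n:ℝ)+1) * Real.sin (((n:ℝ)+1)*t/2)^2 ≤ 1/((n:ℝ)+1) := by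
      have := Real.sin_sq_le_one (((n:ℝ)+1)*t/2)
      have hn : (0:ℝ) < 1/((n:ℝ)+1) := by positivity
      nlinarith
    calc (1/((n:ℝ)+1)) * Real.sin (((n:ℝ)+1)*t/2)^2 / Real.sin (t/2)^2
        ≤ (1/((n:ℝ)+1)) / (t^2/64) := by
          apply div_le_div₀ (by positivity) h6 h5 h4
      _ = 64 / (((n:ℝ)+1) * t^2) := by
          have hn : ((n:ℝ)+1) ≠ 0 := by positivity
          have ht2 : t^2 ≠ 0 := pow_ne_zero 2 ht0
          field_simp

lemma fejerK_periodic (n : ℕ) : Function.Periodic (fejerK n) (2*π) := by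
  intro t
  unfold fejerK
  have h1 : Real.sin ((t + 2*π)/2) ^ 2 = Real.sin (t/2) ^ 2 := by
    have : (t + 2*π)/2 = t/2 + π := by ring
    rw [this, Real.sin_add_pi] ; ring
  have h2 : Real.sin (((n:ℝ)+1)*(t + 2*π)/2) ^ 2 = Real.sin (((n:ℝ)+1)*t/2) ^ 2 := by
    have he : ((n:ℝ)+1)*(t + 2*π)/2 = ((n:ℝ)+1)*t/2 + (n+1 : ℕ) * π := by push_cast ; ring
    rw [he, Real.sin_add_nat_mul_pi]
    rw [mul_pow, ← pow_mul, mul_comm (n+1) 2, pow_mul]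
    norm_num
  rw [h1, h2]


lemma sin_sq_half (y : ℝ) : Real.sin y ^ 2 = 1/2 - Real.cos (2*y)/2 := by
  have h := Real.cos_two_mul y
  have h2 := Real.sin_sq_add_cos_sq y
  linarith

lemma dirichlet (k : ℕ) (u : ℝ) :
    Real.sin ((2*(k:ℝ)+1)*u) = Real.sin u * (1 + 2*∑ j ∈ Finset.Icc 1 k, Real.cos (2*(j:ℝ)*u)) := by
  induction k with
  | zero => norm_num
  | succ k ih =>
    have h := Real.sin_sub_sin ((2*((k:ℝ)+1)+1)*u) ((2*(k:ℝ)+1)*u)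
    have e1 : ((2*((k:ℝ)+1)+1)*u - (2*(k:ℝ)+1)*u)/2 = u := by ring
    have e2 : ((2*((k:ℝ)+1)+1)*u + (2*(k:ℝ)+1)*u)/2 = (2*((k:ℝ)+1))*u := by ring
    rw [e1, e2] at h
    rw [Finset.sum_Icc_succ_top (Nat.succ_le_succ (Nat.zero_le k))]
    push_cast
    push_cast at ih h
    linear_combination ih + h

lemma sq_sum (n : ℕ) (u : ℝ) :
    Real.sin (((n:ℝ)+1)*u)^2 = ∑ k ∈ Finset.range (n+1), Real.sin ((2*(k:ℝ)+1)*u) * Real.sin u := by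
  induction n with
  | zero => norm_num [pow_two]
  | succ n ih =>
    rw [Finset.sum_range_succ]
    have h1 := sin_sq_half (((n:ℝ)+1)*u)
    have h2 := sin_sq_half (((n:ℝ)+2)*u)
    have h3 := Real.cos_sub_cos (2*(((n:ℝ)+1)*u)) (2*(((n:ℝ)+2)*u))
    have e1 : (2*(((n:ℝ)+1)*u) + 2*(((n:ℝ)+2)*u))/2 = (2*(n:ℝ)+3)*u := by ring
    have e2 : (2*(((n:ℝ)+1)*u) - 2*(((n:ℝ)+2)*u))/2 = -u := by ring
    rw [e1, e2, Real.sin_neg] at h3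
    have e3 : ((n:ℕ)+1 : ℕ) = n+1 := rfl
    push_cast
    have e4 : ((n:ℝ)+1+1) = ((n:ℝ)+2) := by ring
    have e5 : (2*((n:ℝ)+1)+1) = (2*(n:ℝ)+3) := by ring
    rw [e4, e5]
    have e6 : ((n:ℝ)+1+1)*u = ((n:ℝ)+2)*u := by ring
    have e7 : (2*((n:ℝ)+1)+1)*u = (2*(n:ℝ)+3)*u := by ring
    linear_combination ih + h2 - h1 + (1/2) * h3

lemma fejerK_eq (n : ℕ) {t : ℝ} (ht : Real.sin (t/2) ≠ 0) :
    fejerK n t = (1/((n:ℝ)+1)) *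
      ∑ k ∈ Finset.range (n+1), (1 + 2*∑ j ∈ Finset.Icc 1 k, Real.cos ((j:ℝ)*t)) := by
  have h1 := sq_sum n (t/2)
  have h2 : ∀ k ∈ Finset.range (n+1), Real.sin ((2*(k:ℝ)+1)*(t/2)) * Real.sin (t/2)
      = Real.sin (t/2)^2 * (1 + 2*∑ j ∈ Finset.Icc 1 k, Real.cos ((j:ℝ)*t)) := by
    intro k _
    rw [dirichlet k (t/2)]
    have : ∀ j ∈ Finset.Icc 1 k, Real.cos (2*(j:ℝ)*(t/2)) = Real.cos ((j:ℝ)*t) := by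
      intro j _
      congr 1
      ring
    rw [Finset.sum_congr rfl this]
    ring
  rw [Finset.sum_congr rfl h2, ← Finset.mul_sum] at h1
  unfold fejerK
  have e : ((n:ℝ)+1)*t/2 = ((n:ℝ)+1)*(t/2) := by ring
  rw [e, h1]
  field_simp

lemma integral_dirichlet (k : ℕ) :
    ∫ t in (-π)..π, (1 + 2*∑ j ∈ Finset.Icc 1 k, Real.cos ((j:ℝ)*t)) = 2*π := by
  have hcont : ∀ j : ℕ, Continuous (fun t : ℝ => Real.cos ((j:ℝ)*t)) := by
    intro j; exact Real.continuous_cos.comp (continuous_const.mul continuous_id)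
  have h1 : ∀ j ∈ Finset.Icc 1 k, (∫ t in (-π)..π, Real.cos ((j:ℝ)*t)) = 0 := by
    intro j hj
    have hj1 : 1 ≤ j := (Finset.mem_Icc.mp hj).1
    have hjne : ((j:ℝ)) ≠ 0 := by
      simp only [ne_eq, Nat.cast_eq_zero]
      omega
    rw [intervalIntegral.integral_comp_mul_left (fun t => Real.cos t) hjne]
    rw [integral_cos]
    have : Real.sin ((j:ℝ)*π) = 0 := Real.sin_nat_mul_pi j
    rw [mul_neg, Real.sin_neg, this]
    simp
  have hsum : IntervalIntegrable (fun t => 2*∑ j ∈ Finset.Icc 1 k, Real.cos ((j:ℝ)*t)) volume (-π) π := by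
    apply Continuous.intervalIntegrable
    exact continuous_const.mul (continuous_finset_sum _ (fun j _ => hcont j))
  rw [intervalIntegral.integral_add (by apply intervalIntegrable_const) hsum]
  have h2 : (∫ t in (-π)..π, 2*∑ j ∈ Finset.Icc 1 k, Real.cos ((j:ℝ)*t)) = 0 := by
    rw [intervalIntegral.integral_const_mul]
    rw [intervalIntegral.integral_finset_sum (fun j _ => ((hcont j).intervalIntegrable _ _))]
    rw [Finset.sum_congr rfl h1]
    simp
  rw [h2]
  simp
  ring

lemma integral_fejerK (n : ℕ) : ∫ t in (-π)..π, fejerK n t = 2*π := by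
  have hae : ∀ᵐ t : ℝ, t ∈ Set.uIoc (-π) π → fejerK n t =
      (1/((n:ℝ)+1)) * ∑ k ∈ Finset.range (n+1), (1 + 2*∑ j ∈ Finset.Icc 1 k, Real.cos ((j:ℝ)*t)) := by
    have hz : (volume : Measure ℝ) {(0:ℝ)} = 0 := measure_singleton 0
    filter_upwards [compl_mem_ae_iff.mpr hz] with t ht hmem
    simp only [Set.mem_compl_iff, Set.mem_singleton_iff] at ht
    apply fejerK_eq
    rw [Set.uIoc_of_le (by linarith [Real.pi_pos] : -π ≤ π)] at hmem
    have h1 : -π < t := hmem.1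
    have h2 : t ≤ π := hmem.2
    intro hs
    rw [Real.sin_eq_zero_iff_of_lt_of_lt (by linarith [Real.pi_pos]) (by linarith [Real.pi_pos])] at hs
    exact ht (by linarith)
  rw [intervalIntegral.integral_congr_ae hae]
  rw [intervalIntegral.integral_const_mul]
  rw [intervalIntegral.integral_finset_sum (fun k _ => ?_)]
  · rw [Finset.sum_congr rfl (fun k _ => integral_dirichlet k)]
    rw [Finset.sum_const, Finset.card_range]
    simp only [nsmul_eq_mul]
    push_cast
    field_simp
  · apply Continuous.intervalIntegrable
    exact continuous_const.add (continuous_const.mul (continuous_finset_sum _ (fun j _ =>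
      Real.continuous_cos.comp (continuous_const.mul continuous_id))))

lemma fejerK_measurable (n : ℕ) : Measurable (fejerK n) := by
  unfold fejerK
  fun_prop

lemma periodic_ii_all {g : ℝ → ℝ} (hper : ∀ t, g (t + 2*π) = g t)
    (hint : IntervalIntegrable g volume (-π) π) :
    ∀ a b, IntervalIntegrable g volume a b := by
  have hgfun : (fun x : ℝ => g (x + 2*π)) = g := funext hper
  have hgfun2 : (fun x : ℝ => g (x - 2*π)) = g := by
    funext y
    have h := hper (y - 2*π)
    have e : y - 2*π + 2*π = y := by ring
    rw [e] at h
    exact h.symm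
  have hL : ∀ p q : ℝ, IntervalIntegrable g volume p q →
      IntervalIntegrable g volume (p - 2*π) (q - 2*π) := by
    intro p q h
    have := h.comp_add_right (2*π)
    rwa [hgfun] at this
  have hR : ∀ p q : ℝ, IntervalIntegrable g volume p q →
      IntervalIntegrable g volume (p + 2*π) (q + 2*π) := by
    intro p q h
    have := h.comp_sub_right (2*π)
    rwa [hgfun2] at this
  have baseL : ∀ m : ℕ, IntervalIntegrable g volume (-π - 2*π*m) (π - 2*π*m) := by
    intro m
    induction m with
    | zero => simpa using hint
    | succ m ih =>
      rw [show (-π - 2*π*((m+1:ℕ):ℝ)) = (-π - 2*π*(m:ℝ)) - 2*π by push_cast; ring,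
        show (π - 2*π*((m+1:ℕ):ℝ)) = (π - 2*π*(m:ℝ)) - 2*π by push_cast; ring]
      exact hL _ _ ih
  have baseR : ∀ m : ℕ, IntervalIntegrable g volume (-π + 2*π*m) (π + 2*π*m) := by
    intro m
    induction m with
    | zero => simpa using hint
    | succ m ih =>
      rw [show (-π + 2*π*((m+1:ℕ):ℝ)) = (-π + 2*π*(m:ℝ)) + 2*π by push_cast; ring,
        show (π + 2*π*((m+1:ℕ):ℝ)) = (π + 2*π*(m:ℝ)) + 2*π by push_cast; ring]
      exact hR _ _ ih
  have key : ∀ m : ℕ, IntervalIntegrable g volume (-π - 2*π*m) (π + 2*π*m) := by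
    intro m
    induction m with
    | zero => simpa using hint
    | succ m ih =>
      have l := baseL (m+1)
      have r := baseR (m+1)
      have l' : IntervalIntegrable g volume (-π - 2*π*((m+1:ℕ):ℝ)) (-π - 2*π*(m:ℝ)) := by
        have e : -π - 2*π*(m:ℝ) = π - 2*π*((m+1:ℕ):ℝ) := by push_cast; ring
        rw [e]; exact l
      have r' : IntervalIntegrable g volume (π + 2*π*(m:ℝ)) (π + 2*π*((m+1:ℕ):ℝ)) := by
        have e : π + 2*π*(m:ℝ) = -π + 2*π*((m+1:ℕ):ℝ) := by push_cast; ring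
        rw [e]; exact r
      exact (l'.trans ih).trans r'
  intro a b
  obtain ⟨m, hm⟩ := exists_nat_ge ((|a| + |b|) / (2*π) + 1)
  have hpi := Real.pi_pos
  have h2πm : |a| + |b| ≤ 2*π*m := by
    have h1 : (|a| + |b|) / (2*π) + 1 ≤ (m:ℝ) := hm
    have h2 : (|a| + |b|) / (2*π) ≤ (m:ℝ) - 1 := by linarith
    have h3 : |a| + |b| ≤ 2*π*((m:ℝ) - 1) := by
      rw [div_le_iff₀ (by positivity)] at h2
      linarith
    nlinarith
  apply (key m).mono_set
  apply Set.uIcc_subset_uIcc <;>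
  · rw [Set.mem_uIcc]
    left
    constructor <;>
      nlinarith [neg_abs_le a, le_abs_self a, abs_nonneg a, abs_nonneg b, neg_abs_le b, le_abs_self b]

lemma int_div_sq {G : ℝ → ℝ} (hGint : ∀ a b, IntervalIntegrable G volume a b)
    (hGpos : ∀ u, 0 ≤ G u) {b c : ℝ} (hb : 0 < b) (hbc : b ≤ c) :
    IntervalIntegrable (fun u => G u / u^2) volume b c := by
  apply IntervalIntegrable.mono_fun' (g := fun u => G u / b^2)
  · exact (hGint b c).div_const _
  · simp only [div_eq_mul_inv]
    exact (hGint b c).def'.aestronglyMeasurable.mul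
      ((measurable_id.pow_const 2).inv.aestronglyMeasurable)
  · filter_upwards [self_mem_ae_restrict measurableSet_uIoc] with u hu
    rw [Set.uIoc_of_le hbc] at hu
    have hu1 : b < u := hu.1
    have h2 : b^2 ≤ u^2 := by nlinarith
    rw [Real.norm_eq_abs, abs_of_nonneg (div_nonneg (hGpos u) (sq_nonneg u))]
    exact div_le_div_of_nonneg_left (hGpos u) (by positivity) h2

lemma dyadic_bound {G : ℝ → ℝ} (hGint : ∀ a b, IntervalIntegrable G volume a b)
    (hGpos : ∀ u, 0 ≤ G u) {ε a : ℝ} (ha : 0 < a) (hε : 0 ≤ ε) :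
    ∀ m : ℕ, (∀ h : ℝ, 0 < h → h ≤ 2^m * a → (∫ u in (-h)..h, G u) ≤ ε * h) →
    (∫ u in a..(2^m * a), G u / u^2) ≤ 4 * ε / a := by
  have main : ∀ m : ℕ, (∀ h : ℝ, 0 < h → h ≤ 2^m * a → (∫ u in (-h)..h, G u) ≤ ε * h) →
      (∫ u in a..(2^m * a), G u / u^2) ≤ (4 - 4/2^m) * ε / a := by
    intro m
    induction m with
    | zero => intro _; norm_num
    | succ m ih =>
      intro hΦ
      have hpow : (0:ℝ) < 2^m := by positivity
      have h1pow : (1:ℝ) ≤ 2^m := by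
        have := pow_le_pow_right₀ (by norm_num : (1:ℝ) ≤ 2) (Nat.zero_le m)
        simpa using this
      have hle : (2:ℝ)^m * a ≤ 2^(m+1) * a := by
        rw [pow_succ]
        nlinarith
      have hΦm : ∀ h : ℝ, 0 < h → h ≤ 2^m * a → (∫ u in (-h)..h, G u) ≤ ε * h :=
        fun h h0 hh => hΦ h h0 (hh.trans hle)
      have ha' : a ≤ 2^m * a := by nlinarith
      set b : ℝ := 2^m * a with hb
      have hbpos : 0 < b := by positivity
      have e2 : (2:ℝ)^(m+1) * a = 2*b := by rw [hb, pow_succ]; ring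
      rw [e2]
      have h_int1 : IntervalIntegrable (fun u => G u / u^2) volume a b :=
        int_div_sq hGint hGpos ha ha'
      have h_int2 : IntervalIntegrable (fun u => G u / u^2) volume b (2*b) :=
        int_div_sq hGint hGpos hbpos (by nlinarith)
      rw [← intervalIntegral.integral_add_adjacent_intervals h_int1 h_int2]
      have bound2 : (∫ u in b..(2*b), G u / u^2) ≤ 2*ε/b := by
        have step1 : (∫ u in b..(2*b), G u / u^2) ≤ ∫ u in b..(2*b), G u / b^2 := by
          apply intervalIntegral.integral_mono_on (by nlinarith) h_int2 ((hGint b (2*b)).div_const _)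
          intro u hu
          exact div_le_div_of_nonneg_left (hGpos u) (by positivity) (by nlinarith [hu.1])
        have step2 : (∫ u in b..(2*b), G u / b^2) = (∫ u in b..(2*b), G u) / b^2 :=
          intervalIntegral.integral_div _ _
        have step3 : (∫ u in b..(2*b), G u) ≤ ∫ u in (-(2*b))..(2*b), G u := by
          have e := intervalIntegral.integral_add_adjacent_intervals
            (hGint (-(2*b)) b) (hGint b (2*b))
          have pos1 : 0 ≤ ∫ u in (-(2*b))..b, G u :=
            intervalIntegral.integral_nonneg (by nlinarith) (fun u _ => hGpos u)
          linarith
        have step4 : (∫ u in (-(2*b))..(2*b), G u) ≤ ε * (2*b) := by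
          apply hΦ (2*b) (by positivity)
          rw [e2]
        have step5 : (∫ u in b..(2*b), G u) / b^2 ≤ (ε * (2*b)) / b^2 := by
          gcongr
          exact step3.trans step4
        have e3 : (ε * (2*b)) / b^2 = 2*ε/b := by field_simp
        calc (∫ u in b..(2*b), G u / u^2) ≤ ∫ u in b..(2*b), G u / b^2 := step1
          _ = (∫ u in b..(2*b), G u) / b^2 := step2
          _ ≤ (ε * (2*b)) / b^2 := step5
          _ = 2*ε/b := e3
      have etot : (4 - 4/2^(m+1)) * ε / a = (4 - 4/2^m) * ε / a + 2*ε/b := by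
        rw [hb]
        field_simp
        ring
      rw [etot]
      have hih := ih hΦm
      linarith
  intro m hΦ
  refine (main m hΦ).trans ?_
  have hpow : (0:ℝ) < 2^m := by positivity
  have h5 : 0 ≤ ε * (4/2^m) := mul_nonneg hε (by positivity)
  have h4 : (4 - 4/2^m) * ε ≤ 4 * ε := by nlinarith
  exact (div_le_div_iff_of_pos_right ha).mpr h4

lemma exists_pow_between {a δ : ℝ} (ha : 0 < a) (haδ : a ≤ δ) :
    ∃ m : ℕ, δ ≤ 2^m * a ∧ 2^m * a ≤ 2*δ := by
  have hex : ∃ m : ℕ, δ ≤ 2^m * a := by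
    obtain ⟨m, hm⟩ := pow_unbounded_of_one_lt (δ/a) (by norm_num : (1:ℝ) < 2)
    refine ⟨m, ?_⟩
    rw [div_lt_iff₀ ha] at hm
    nlinarith
  classical
  refine ⟨Nat.find hex, Nat.find_spec hex, ?_⟩
  rcases Nat.eq_zero_or_pos (Nat.find hex) with h0 | hpos
  · rw [h0]
    norm_num
    linarith
  · obtain ⟨k, hk⟩ : ∃ k, Nat.find hex = k+1 :=
      ⟨Nat.find hex - 1, (Nat.succ_pred_eq_of_pos hpos).symm⟩
    have hlt : ¬ δ ≤ 2^k * a := Nat.find_min hex (by omega)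
    push_neg at hlt
    rw [hk, pow_succ]
    nlinarith


/-- The Fejér means `σ_n(x, f) = (1/2π) ∫_𝕋 K_n(x - t) f(t) dt`. -/
noncomputable def fejerMean (n : ℕ) (f : ℝ → ℝ) (x : ℝ) : ℝ :=
  (1 / (2 * π)) * ∫ t in (-π)..π, fejerK n (x - t) * f t

set_option maxHeartbeats 4000000 in
/-- Corollary 1: Fejér means along perturbed points `x + θ_n` with
`|θ_n| ≤ C/n` converge to `f(x)` at every Lebesgue point `x` of `f ∈ L¹(𝕋)`. -/
theorem fejer_means_perturbed_convergence
    (f : ℝ → ℝ) (hfper : ∀ t, f (t + 2 * π) = f t)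
    (hfint : IntervalIntegrable f volume (-π) π)
    (θ : ℕ → ℝ) (C : ℝ) (hθ : ∀ n : ℕ, 1 ≤ n → |θ n| ≤ C / n)
    (x : ℝ)
    (hLeb : Tendsto (fun h : ℝ => (1 / (2 * h)) * ∫ t in (-h)..h, |f (x + t) - f x|)
      (𝓝[>] (0 : ℝ)) (𝓝 0)) :
    Tendsto (fun n => fejerMean n f (x + θ n)) atTop (𝓝 (f x)) := by
  have hpi := Real.pi_pos
  set G : ℝ → ℝ := fun u => |f (x + u) - f x| with hGdef
  have hGpos : ∀ u, 0 ≤ G u := fun u => abs_nonneg _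
  have hf_all : ∀ a b, IntervalIntegrable f volume a b :=
    periodic_ii_all (by intro t; rw [hfper]) hfint
  have hGper : ∀ u, G (u + 2*π) = G u := by
    intro u
    simp only [hGdef]
    rw [show x + (u + 2*π) = (x + u) + 2*π by ring, hfper]
  have hfshift : ∀ a b, IntervalIntegrable (fun u => f (x + u)) volume a b := by
    intro a b
    have h2 := (hf_all (x + a) (x + b)).comp_add_left x
    rwa [show x + a - x = a by ring, show x + b - x = b by ring] at h2
  have hGint : ∀ a b, IntervalIntegrable G volume a b := by
    intro a b
    exact ((hfshift a b).sub intervalIntegrable_const).abs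
  have hGnegint : ∀ a b, IntervalIntegrable (fun v => G (-v)) volume a b := by
    intro a b
    have h := (hGint (-a) (-b)).comp_mul_left (c := -1)
    rw [show (-a)/(-1) = a by ring, show (-b)/(-1) = b by ring] at h
    simpa only [neg_one_mul] using h
  set M : ℝ := ∫ u in (-π)..π, G u with hM
  have hC : 0 ≤ C := by
    have h := hθ 1 le_rfl
    simp only [Nat.cast_one, div_one] at h
    exact (abs_nonneg _).trans h
  set D : ℝ := 2*C + 2 with hD
  have hDpos : 0 < D := by positivity
  have hD2 : 2 ≤ D := by linarith
  -- kernel-product integrability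
  have hKmeas : ∀ (c : ℝ) (n : ℕ), Measurable (fun u : ℝ => fejerK n (c - u)) :=
    fun c n => (fejerK_measurable n).comp (measurable_const.sub measurable_id)
  have hWint : ∀ (n : ℕ) (c : ℝ) (g : ℝ → ℝ), (∀ a b, IntervalIntegrable g volume a b) →
      ∀ a b, IntervalIntegrable (fun u => fejerK n (c - u) * g u) volume a b := by
    intro n c g hg a b
    apply IntervalIntegrable.mono_fun' (g := fun u => ((n:ℝ)+1) * |g u|)
    · exact ((hg a b).abs.const_mul _)
    · exact ((hKmeas c n).aestronglyMeasurable.restrict.mul (hg a b).def'.aestronglyMeasurable)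
    · apply ae_of_all
      intro u
      dsimp only
      rw [Real.norm_eq_abs, abs_mul]
      calc |fejerK n (c-u)| * |g u| = fejerK n (c-u) * |g u| := by
            rw [abs_of_nonneg (fejerK_nonneg _ _)]
        _ ≤ ((n:ℝ)+1) * |g u| := mul_le_mul_of_nonneg_right (fejerK_le n _) (abs_nonneg _)
  -- representation of the error
  have hrep : ∀ (n : ℕ) (y : ℝ), fejerMean n f (x + y) - f x
      = (1/(2*π)) * ∫ u in (-π)..π, fejerK n (y - u) * (f (x + u) - f x) := by
    intro n y
    have hsub : ∀ (g : ℝ → ℝ), (∫ u in (-π - x)..(π - x), g (x + u)) = ∫ t in (-π)..π, g t := by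
      intro g
      rw [intervalIntegral.integral_comp_add_left g x, show x + (-π - x) = -π by ring,
        show x + (π - x) = π by ring]
    have hWper : Function.Periodic (fun u => fejerK n (y - u) * f (x + u)) (2*π) := by
      intro u
      have h1 : fejerK n (y - (u + 2*π)) = fejerK n (y - u) := by
        rw [show y - (u + 2*π) = (y - u) - (2*π) by ring, (fejerK_periodic n).sub_eq]
      simp only
      rw [h1, show x + (u + 2*π) = (x+u) + 2*π by ring, hfper]
    have step1 : (∫ t in (-π)..π, fejerK n (x + y - t) * f t)
        = ∫ u in (-π)..π, fejerK n (y - u) * f (x + u) := by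
      rw [← hsub (fun t => fejerK n (x + y - t) * f t)]
      have e : ∀ u : ℝ, fejerK n (x + y - (x + u)) * f (x + u)
          = fejerK n (y - u) * f (x + u) := by
        intro u; congr 2; ring
      rw [intervalIntegral.integral_congr (fun u _ => e u)]
      have := hWper.intervalIntegral_add_eq (-π - x) (-π)
      rw [show -π - x + 2*π = π - x by ring, show -π + 2*π = π by ring] at this
      exact this
    have hKshift : (∫ u in (-π)..π, fejerK n (y - u)) = 2*π := by
      rw [intervalIntegral.integral_comp_sub_left (fejerK n) y,
        show y - -π = (y - π) + 2*π by ring]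
      have := (fejerK_periodic n).intervalIntegral_add_eq (y - π) (-π)
      rw [show -π + 2*π = π by ring] at this
      rw [this, integral_fejerK n]
    have hint1 : IntervalIntegrable (fun u => fejerK n (y - u) * f (x + u)) volume (-π) π :=
      hWint n y _ hfshift (-π) π
    have hint2 : IntervalIntegrable (fun u => fejerK n (y - u) * f x) volume (-π) π := by
      have := hWint n y (fun _ => f x) (fun a b => intervalIntegrable_const) (-π) π
      exact this
    have hsplit : (∫ u in (-π)..π, fejerK n (y - u) * (f (x + u) - f x))
        = (∫ u in (-π)..π, fejerK n (y - u) * f (x + u))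
          - ∫ u in (-π)..π, fejerK n (y - u) * f x := by
      rw [← intervalIntegral.integral_sub hint1 hint2]
      congr 1
      funext u
      ring
    have hconst : (∫ u in (-π)..π, fejerK n (y - u) * f x)
        = (2*π) * f x := by
      rw [intervalIntegral.integral_mul_const, hKshift]
    rw [hsplit, hconst]
    unfold fejerMean
    rw [step1]
    field_simp
  -- the main estimate
  rw [Metric.tendsto_atTop]
  intro ε hε
  set B : ℝ := 2*D + 2048/D with hB
  have hBpos : 0 < B := by positivity
  set ε' : ℝ := (π*ε)/B with hε'
  have hε'pos : 0 < ε' := by positivity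
  -- Lebesgue point: get δ₀
  rw [Metric.tendsto_nhdsWithin_nhds] at hLeb
  obtain ⟨δ₀, hδ₀pos, hδ₀⟩ := hLeb (ε'/2) (by positivity)
  set δ : ℝ := min (δ₀/4) (π/2) with hδdef
  have hδpos : 0 < δ := by positivity
  have hδπ : δ ≤ π/2 := min_le_right _ _
  have hδδ₀ : 2*δ < δ₀ := by
    have h1 : δ ≤ δ₀/4 := min_le_left _ _
    linarith
  have hΦ : ∀ h : ℝ, 0 < h → h ≤ 2*δ → (∫ u in (-h)..h, G u) ≤ ε' * h := by
    intro h h0 hh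
    have hd : dist h 0 < δ₀ := by
      rw [Real.dist_eq, sub_zero, abs_of_pos h0]
      linarith
    have := hδ₀ (Set.mem_Ioi.mpr h0) hd
    rw [Real.dist_eq, sub_zero] at this
    have h2 : |(1/(2*h)) * ∫ u in (-h)..h, G u| < ε'/2 := this
    have h3 : (1/(2*h)) * (∫ u in (-h)..h, G u) < ε'/2 := (le_abs_self _).trans_lt h2
    have h5 : (∫ u in (-h)..h, G u) = (2*h) * ((1/(2*h)) * ∫ u in (-h)..h, G u) := by
      field_simp
    rw [h5]
    calc (2*h) * ((1/(2*h)) * ∫ u in (-h)..h, G u) ≤ (2*h) * (ε'/2) := by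
          apply mul_le_mul_of_nonneg_left h3.le (by positivity)
      _ = ε' * h := by ring
  -- choose N
  obtain ⟨N₁, hN₁⟩ := exists_nat_ge (D/δ)
  obtain ⟨N₂, hN₂⟩ := exists_nat_ge (512*M/(δ^2*(π*ε)))
  set N : ℕ := max (max N₁ N₂) 1 with hN
  refine ⟨N, fun n hn => ?_⟩
  have hn1 : 1 ≤ n := le_trans (le_max_right _ _) hn
  have hnpos : (0:ℝ) < n := by exact_mod_cast hn1
  have hnN₁ : (N₁:ℝ) ≤ n := by exact_mod_cast le_trans (le_trans (le_max_left _ _) (le_max_left _ _)) hn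
  have hnN₂ : (N₂:ℝ) ≤ n := by exact_mod_cast le_trans (le_trans (le_max_right _ _) (le_max_left _ _)) hn
  set y : ℝ := θ n with hy
  set a : ℝ := D/n with ha
  have hapos : 0 < a := by positivity
  have haδ : a ≤ δ := by
    rw [ha, div_le_iff₀ hnpos]
    have h1 : D/δ ≤ (n:ℝ) := le_trans hN₁ hnN₁
    rw [div_le_iff₀ hδpos] at h1
    linarith
  have hya : |y| ≤ a/2 := by
    have h1 := hθ n hn1
    rw [hy, ha]
    calc |θ n| ≤ C/n := h1
      _ ≤ (D/2)/n := by
          gcongr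
          · linarith
      _ = D/n/2 := by ring
  have hyδ : |y| ≤ δ/2 := hya.trans (by linarith)
  -- pointwise kernel bounds
  have hKbound : ∀ u : ℝ, |u| ≤ π → a ≤ |u| →
      fejerK n (y - u) ≤ 256/(((n:ℝ)+1) * u^2) := by
    intro u hu1 hu2
    have h1 : |y - u| ≤ 3*π/2 := by
      have := abs_sub_abs_le_abs_sub y u
      have h2 := abs_sub y u
      calc |y - u| ≤ |y| + |u| := abs_sub _ _
        _ ≤ δ/2 + π := by linarith [hyδ]
        _ ≤ 3*π/2 := by linarith [hδπ]
    have h2 : |u|/2 ≤ |y - u| := by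
      have := abs_sub_abs_le_abs_sub u y
      have e : |u - y| = |y - u| := abs_sub_comm u y
      have h3 : |y| ≤ |u|/2 := hya.trans (by linarith)
      calc |u|/2 = |u| - |u|/2 := by ring
        _ ≤ |u| - |y| := by linarith
        _ ≤ |u - y| := abs_sub_abs_le_abs_sub u y
        _ = |y - u| := e
    have h4 := fejerK_le_inv_sq n h1
    have h5 : u^2/4 ≤ (y-u)^2 := by
      have h6 := mul_self_le_mul_self (by positivity) h2
      rw [abs_mul_abs_self] at h6
      nlinarith [h6, sq_abs u]
    refine h4.trans ?_
    have h8 : 0 < |u| := lt_of_lt_of_le hapos hu2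
    have hu0 : 0 < u^2 := by rw [← sq_abs]; exact pow_pos h8 2
    have hyu : (0:ℝ) < (y-u)^2 := by nlinarith
    rw [div_le_div_iff₀ (by positivity) (by positivity)]
    have h9 := mul_le_mul_of_nonneg_left h5 (by positivity : (0:ℝ) ≤ 64*((n:ℝ)+1))
    linarith [h9]
  set W : ℝ → ℝ := fun u => fejerK n (y - u) * G u with hW
  have hWi : ∀ p q : ℝ, IntervalIntegrable W volume p q := by
    intro p q
    have := hWint n y G hGint p q
    simpa only [hW]
  have hWpos : ∀ u, 0 ≤ W u := fun u => mul_nonneg (fejerK_nonneg _ _) (hGpos u)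
  -- splitting
  have hδπ' : δ ≤ π := by linarith
  have split : (∫ u in (-π)..π, W u) =
      (∫ u in (-π)..(-δ), W u) + (∫ u in (-δ)..(-a), W u) + (∫ u in (-a)..a, W u)
        + (∫ u in a..δ, W u) + (∫ u in δ..π, W u) := by
    rw [← intervalIntegral.integral_add_adjacent_intervals (hWi (-π) (-δ)) (hWi (-δ) π)]
    rw [← intervalIntegral.integral_add_adjacent_intervals (hWi (-δ) (-a)) (hWi (-a) π)]
    rw [← intervalIntegral.integral_add_adjacent_intervals (hWi (-a) a) (hWi a π)]
    rw [← intervalIntegral.integral_add_adjacent_intervals (hWi a δ) (hWi δ π)]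
    ring
  have hn1' : (1:ℝ) ≤ n := by exact_mod_cast hn1
  have hMnn : 0 ≤ M := intervalIntegral.integral_nonneg (by linarith) (fun u _ => hGpos u)
  have h_nonneg : ∀ p q : ℝ, p ≤ q → 0 ≤ ∫ u in p..q, G u :=
    fun p q h => intervalIntegral.integral_nonneg h (fun u _ => hGpos u)
  have hGM1 : (∫ u in (-π)..(-δ), G u) ≤ M := by
    have e := intervalIntegral.integral_add_adjacent_intervals (hGint (-π) (-δ)) (hGint (-δ) π)
    have h0 := h_nonneg (-δ) π (by linarith)
    rw [hM]
    linarith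
  have hGM5 : (∫ u in δ..π, G u) ≤ M := by
    have e := intervalIntegral.integral_add_adjacent_intervals (hGint (-π) δ) (hGint δ π)
    have h0 := h_nonneg (-π) δ (by linarith)
    rw [hM]
    linarith
  have hT1 : (∫ u in (-π)..(-δ), W u) ≤ 256/(((n:ℝ)+1)*δ^2) * M := by
    have hb : ∀ u ∈ Set.Icc (-π) (-δ), W u ≤ (256/(((n:ℝ)+1)*δ^2)) * G u := by
      intro u hu
      have h1 : |u| ≤ π := abs_le.mpr ⟨hu.1, by linarith [hu.2]⟩
      have hδu : δ ≤ |u| := le_abs.mpr (Or.inr (by linarith [hu.2]))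
      have h2 : a ≤ |u| := le_trans haδ hδu
      have h3 := hKbound u h1 h2
      have h5 : δ^2 ≤ u^2 := by
        nlinarith [mul_self_le_mul_self hδpos.le hδu, sq_abs u]
      have h4 : 256/(((n:ℝ)+1)*u^2) ≤ 256/(((n:ℝ)+1)*δ^2) := by
        apply div_le_div_of_nonneg_left (by norm_num) (by positivity)
        have h6 : (0:ℝ) ≤ (n:ℝ)+1 := by positivity
        nlinarith [mul_le_mul_of_nonneg_left h5 h6]
      calc W u = fejerK n (y-u) * G u := rfl
        _ ≤ (256/(((n:ℝ)+1)*u^2)) * G u := mul_le_mul_of_nonneg_right h3 (hGpos u)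
        _ ≤ (256/(((n:ℝ)+1)*δ^2)) * G u := mul_le_mul_of_nonneg_right h4 (hGpos u)
    calc (∫ u in (-π)..(-δ), W u) ≤ ∫ u in (-π)..(-δ), (256/(((n:ℝ)+1)*δ^2)) * G u :=
          intervalIntegral.integral_mono_on (by linarith) (hWi _ _) ((hGint _ _).const_mul _) hb
      _ = (256/(((n:ℝ)+1)*δ^2)) * ∫ u in (-π)..(-δ), G u :=
          intervalIntegral.integral_const_mul _ _
      _ ≤ (256/(((n:ℝ)+1)*δ^2)) * M := mul_le_mul_of_nonneg_left hGM1 (by positivity)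
  have hT5 : (∫ u in δ..π, W u) ≤ 256/(((n:ℝ)+1)*δ^2) * M := by
    have hb : ∀ u ∈ Set.Icc δ π, W u ≤ (256/(((n:ℝ)+1)*δ^2)) * G u := by
      intro u hu
      have h1 : |u| ≤ π := abs_le.mpr ⟨by linarith [hu.1], hu.2⟩
      have hδu : δ ≤ |u| := le_abs.mpr (Or.inl hu.1)
      have h2 : a ≤ |u| := le_trans haδ hδu
      have h3 := hKbound u h1 h2
      have h5 : δ^2 ≤ u^2 := by
        nlinarith [mul_self_le_mul_self hδpos.le hδu, sq_abs u]
      have h4 : 256/(((n:ℝ)+1)*u^2) ≤ 256/(((n:ℝ)+1)*δ^2) := by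
        apply div_le_div_of_nonneg_left (by norm_num) (by positivity)
        have h6 : (0:ℝ) ≤ (n:ℝ)+1 := by positivity
        nlinarith [mul_le_mul_of_nonneg_left h5 h6]
      calc W u = fejerK n (y-u) * G u := rfl
        _ ≤ (256/(((n:ℝ)+1)*u^2)) * G u := mul_le_mul_of_nonneg_right h3 (hGpos u)
        _ ≤ (256/(((n:ℝ)+1)*δ^2)) * G u := mul_le_mul_of_nonneg_right h4 (hGpos u)
    calc (∫ u in δ..π, W u) ≤ ∫ u in δ..π, (256/(((n:ℝ)+1)*δ^2)) * G u :=
          intervalIntegral.integral_mono_on (by linarith) (hWi _ _) ((hGint _ _).const_mul _) hb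
      _ = (256/(((n:ℝ)+1)*δ^2)) * ∫ u in δ..π, G u :=
          intervalIntegral.integral_const_mul _ _
      _ ≤ (256/(((n:ℝ)+1)*δ^2)) * M := mul_le_mul_of_nonneg_left hGM5 (by positivity)
  have hT3 : (∫ u in (-a)..a, W u) ≤ 2*D*ε' := by
    have hb : ∀ u ∈ Set.Icc (-a) a, W u ≤ ((n:ℝ)+1) * G u := by
      intro u _
      exact mul_le_mul_of_nonneg_right (fejerK_le n _) (hGpos u)
    have h1 : (∫ u in (-a)..a, W u) ≤ ((n:ℝ)+1) * ∫ u in (-a)..a, G u := by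
      calc (∫ u in (-a)..a, W u) ≤ ∫ u in (-a)..a, ((n:ℝ)+1) * G u :=
            intervalIntegral.integral_mono_on (by linarith) (hWi _ _)
              ((hGint _ _).const_mul _) hb
        _ = ((n:ℝ)+1) * ∫ u in (-a)..a, G u := intervalIntegral.integral_const_mul _ _
    have h2 : (∫ u in (-a)..a, G u) ≤ ε' * a := hΦ a hapos (by linarith)
    have h3 : ((n:ℝ)+1) * (∫ u in (-a)..a, G u) ≤ ((n:ℝ)+1) * (ε' * a) :=
      mul_le_mul_of_nonneg_left h2 (by positivity)
    have hnn : (n:ℝ)+1 ≤ 2*(n:ℝ) := by linarith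
    have e : 2*D*ε' = (2*(n:ℝ)) * (ε' * a) := by
      rw [ha]
      field_simp
    rw [e]
    exact le_trans (le_trans h1 h3) (mul_le_mul_of_nonneg_right hnn (by positivity))
  obtain ⟨m, hm1, hm2⟩ := exists_pow_between hapos haδ
  have hΦm : ∀ h : ℝ, 0 < h → h ≤ 2^m * a → (∫ u in (-h)..h, G u) ≤ ε' * h :=
    fun h h0 hh => hΦ h h0 (hh.trans hm2)
  have hdyadic := dyadic_bound hGint hGpos hapos hε'pos.le m hΦm
  have e3 : (256/((n:ℝ)+1)) * (4*ε'/a) ≤ 1024*ε'/D := by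
    have e1 : (256/((n:ℝ)+1)) * (4*ε'/a) = 1024*ε'*n/(((n:ℝ)+1)*D) := by
      rw [ha]
      field_simp
      ring
    rw [e1, div_le_div_iff₀ (by positivity) (by positivity)]
    have h10 : 0 ≤ 1024*ε'*D := by positivity
    nlinarith [h10]
  have hT4 : (∫ u in a..δ, W u) ≤ 1024*ε'/D := by
    have hb : ∀ u ∈ Set.Icc a δ, W u ≤ (256/((n:ℝ)+1)) * (G u / u^2) := by
      intro u hu
      have hu0 : 0 < u := lt_of_lt_of_le hapos hu.1
      have h1 : |u| ≤ π := by rw [abs_of_pos hu0]; linarith [hu.2]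
      have h2 : a ≤ |u| := by rw [abs_of_pos hu0]; exact hu.1
      have h3 := hKbound u h1 h2
      have e : (256/(((n:ℝ)+1)*u^2)) * G u = (256/((n:ℝ)+1)) * (G u / u^2) := by
        field_simp
      rw [← e]
      exact mul_le_mul_of_nonneg_right h3 (hGpos u)
    have hint2 : IntervalIntegrable (fun u => (256/((n:ℝ)+1)) * (G u / u^2)) volume a δ :=
      (int_div_sq hGint hGpos hapos haδ).const_mul _
    have h1 : (∫ u in a..δ, W u) ≤ (256/((n:ℝ)+1)) * ∫ u in a..δ, G u / u^2 := by
      calc (∫ u in a..δ, W u) ≤ ∫ u in a..δ, (256/((n:ℝ)+1)) * (G u / u^2) :=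
            intervalIntegral.integral_mono_on haδ (hWi _ _) hint2 hb
        _ = (256/((n:ℝ)+1)) * ∫ u in a..δ, G u / u^2 := intervalIntegral.integral_const_mul _ _
    have h2 : (∫ u in a..δ, G u / u^2) ≤ ∫ u in a..(2^m*a), G u / u^2 := by
      have e := intervalIntegral.integral_add_adjacent_intervals
        (int_div_sq hGint hGpos hapos haδ) (int_div_sq hGint hGpos hδpos hm1)
      have h0 : 0 ≤ ∫ u in δ..(2^m*a), G u / u^2 :=
        intervalIntegral.integral_nonneg hm1 (fun u _ => div_nonneg (hGpos u) (sq_nonneg u))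
      linarith
    calc (∫ u in a..δ, W u) ≤ (256/((n:ℝ)+1)) * ∫ u in a..δ, G u / u^2 := h1
      _ ≤ (256/((n:ℝ)+1)) * (4*ε'/a) := by
          apply mul_le_mul_of_nonneg_left (h2.trans hdyadic) (by positivity)
      _ ≤ 1024*ε'/D := e3
  have hT2 : (∫ u in (-δ)..(-a), W u) ≤ 1024*ε'/D := by
    have ecv : (∫ u in (-δ)..(-a), W u) = ∫ v in a..δ, W (-v) :=
      (intervalIntegral.integral_comp_neg W).symm
    rw [ecv]
    have hGnpos : ∀ v : ℝ, 0 ≤ G (-v) := fun v => hGpos (-v)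
    have hb : ∀ v ∈ Set.Icc a δ, W (-v) ≤ (256/((n:ℝ)+1)) * (G (-v) / v^2) := by
      intro v hv
      have hv0 : 0 < v := lt_of_lt_of_le hapos hv.1
      have h1 : |(-v)| ≤ π := by rw [abs_neg, abs_of_pos hv0]; linarith [hv.2]
      have h2 : a ≤ |(-v)| := by rw [abs_neg, abs_of_pos hv0]; exact hv.1
      have h3 := hKbound (-v) h1 h2
      have e : (256/(((n:ℝ)+1)*(-v)^2)) * G (-v) = (256/((n:ℝ)+1)) * (G (-v) / v^2) := by
        rw [neg_sq]
        field_simp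
      calc W (-v) = fejerK n (y - -v) * G (-v) := rfl
        _ ≤ (256/(((n:ℝ)+1)*(-v)^2)) * G (-v) := mul_le_mul_of_nonneg_right h3 (hGnpos v)
        _ = (256/((n:ℝ)+1)) * (G (-v) / v^2) := e
    have hWnegint : IntervalIntegrable (fun v => W (-v)) volume a δ := by
      have h := (hWi (-δ) (-a)).comp_mul_left (c := -1)
      rw [show (-δ)/(-1) = δ by ring, show (-a)/(-1) = a by ring] at h
      simp only [neg_one_mul] at h
      exact h.symm
    have hint2 : IntervalIntegrable (fun v => (256/((n:ℝ)+1)) * (G (-v) / v^2)) volume a δ :=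
      (int_div_sq hGnegint hGnpos hapos haδ).const_mul _
    have h1 : (∫ v in a..δ, W (-v)) ≤ (256/((n:ℝ)+1)) * ∫ v in a..δ, G (-v) / v^2 := by
      calc (∫ v in a..δ, W (-v)) ≤ ∫ v in a..δ, (256/((n:ℝ)+1)) * (G (-v) / v^2) :=
            intervalIntegral.integral_mono_on haδ hWnegint hint2 hb
        _ = (256/((n:ℝ)+1)) * ∫ v in a..δ, G (-v) / v^2 :=
            intervalIntegral.integral_const_mul _ _
    have hΦneg : ∀ h : ℝ, 0 < h → h ≤ 2^m * a → (∫ v in (-h)..h, G (-v)) ≤ ε' * h := by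
      intro h h0 hh
      have e := intervalIntegral.integral_comp_neg G (a := -h) (b := h)
      rw [neg_neg] at e
      rw [e]
      exact hΦm h h0 hh
    have hdy2 := dyadic_bound hGnegint hGnpos hapos hε'pos.le m hΦneg
    have h2 : (∫ v in a..δ, G (-v) / v^2) ≤ ∫ v in a..(2^m*a), G (-v) / v^2 := by
      have e := intervalIntegral.integral_add_adjacent_intervals
        (int_div_sq hGnegint hGnpos hapos haδ) (int_div_sq hGnegint hGnpos hδpos hm1)
      have h0 : 0 ≤ ∫ v in δ..(2^m*a), G (-v) / v^2 :=
        intervalIntegral.integral_nonneg hm1 (fun u _ => div_nonneg (hGnpos u) (sq_nonneg u))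
      linarith
    calc (∫ v in a..δ, W (-v)) ≤ (256/((n:ℝ)+1)) * ∫ v in a..δ, G (-v) / v^2 := h1
      _ ≤ (256/((n:ℝ)+1)) * (4*ε'/a) := by
          apply mul_le_mul_of_nonneg_left (h2.trans hdy2) (by positivity)
      _ ≤ 1024*ε'/D := e3
  -- total
  have htail : 512*M/(((n:ℝ)+1)*δ^2) < π*ε := by
    have h1 : 512*M/(δ^2*(π*ε)) ≤ (n:ℝ) := le_trans hN₂ hnN₂
    rw [div_le_iff₀ (by positivity)] at h1
    rw [div_lt_iff₀ (by positivity)]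
    have h2 : 0 < δ^2*(π*ε) := by positivity
    nlinarith
  have hBsum : 2*D*ε' + 1024*ε'/D + 1024*ε'/D = π*ε := by
    rw [hε', hB]
    field_simp
    ring
  have hJ : (∫ u in (-π)..π, W u) < 2*π*ε := by
    rw [split]
    calc (∫ u in (-π)..(-δ), W u) + (∫ u in (-δ)..(-a), W u) + (∫ u in (-a)..a, W u)
          + (∫ u in a..δ, W u) + (∫ u in δ..π, W u)
        ≤ 256/(((n:ℝ)+1)*δ^2)*M + 1024*ε'/D + 2*D*ε' + 1024*ε'/D
          + 256/(((n:ℝ)+1)*δ^2)*M :=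
          add_le_add (add_le_add (add_le_add (add_le_add hT1 hT2) hT3) hT4) hT5
      _ = 512*M/(((n:ℝ)+1)*δ^2) + (2*D*ε' + 1024*ε'/D + 1024*ε'/D) := by ring
      _ < π*ε + π*ε := by linarith [htail, hBsum]
      _ = 2*π*ε := by ring
  -- conclusion
  have habs : |∫ u in (-π)..π, fejerK n (y - u) * (f (x + u) - f x)|
      ≤ ∫ u in (-π)..π, W u := by
    refine (intervalIntegral.abs_integral_le_integral_abs (by linarith)).trans_eq ?_
    apply intervalIntegral.integral_congr
    intro u _
    simp only [hW, hGdef]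
    rw [abs_mul, abs_of_nonneg (fejerK_nonneg _ _)]
  rw [Real.dist_eq, hrep n y, abs_mul, abs_of_pos (show (0:ℝ) < 1/(2*π) by positivity)]
  calc (1/(2*π)) * |∫ u in (-π)..π, fejerK n (y - u) * (f (x + u) - f x)|
      ≤ (1/(2*π)) * ∫ u in (-π)..π, W u := mul_le_mul_of_nonneg_left habs (by positivity)
    _ < (1/(2*π)) * (2*π*ε) := by
        apply mul_lt_mul_of_pos_left hJ (by positivity)
    _ = ε := by field_simp
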